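/- There exists a real constant C > 0 such that for all natural numbers n ≥ 2, n · (Real.log n)^(Real.log 2) ≤ C · ∑_{k=1}^{n} 2^(ω(k)), where ω(k) denotes the number of distinct prime divisors of k. -/

import Mathlib

open Finset

open ArithmeticFunction in
/-- The number of squarefree divisors of `k` is `2 ^ ω k`. -/
lemma aux_card_sf_divisors {k : ℕ} (hk : k ≠ 0) :
    ({d ∈ k.divisors | Squarefree d}).card = 2 ^ (cardDistinctFactors k) := by
  have h := Nat.divisors_filter_squarefree hk
  have h1 : ({d ∈ k.divisors | Squarefree d}).card =
      ((UniqueFactorizationMonoid.normalizedFactors k).toFinset.powerset.val.map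
        (fun x => x.val.prod)).card := by
    rw [Finset.card, h]
  rw [h1, Multiset.card_map]
  change (UniqueFactorizationMonoid.normalizedFactors k).toFinset.powerset.card = _
  rw [Finset.card_powerset, Nat.factors_eq, cardDistinctFactors_apply]
  exact congrArg (fun m => 2 ^ m) (List.card_toFinset k.primeFactorsList)

open ArithmeticFunction in
/-- Double counting: sum of number of squarefree divisors. -/
lemma aux_swap_sum (n : ℕ) :
    ∑ k ∈ Finset.Icc 1 n, 2 ^ (cardDistinctFactors k) =
      ∑ d ∈ {d ∈ Finset.Icc 1 n | Squarefree d}, n / d := by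
  calc ∑ k ∈ Finset.Icc 1 n, 2 ^ (cardDistinctFactors k)
      = ∑ k ∈ Finset.Icc 1 n, ({d ∈ Finset.Icc 1 n | Squarefree d ∧ d ∣ k}).card := by
        refine Finset.sum_congr rfl fun k hk => ?_
        rw [Finset.mem_Icc] at hk
        have hk0 : k ≠ 0 := by omega
        rw [← aux_card_sf_divisors hk0]
        congr 1
        ext d
        simp only [Finset.mem_filter, Nat.mem_divisors, Finset.mem_Icc]
        constructor
        · rintro ⟨⟨hdk, -⟩, hsf⟩
          exact ⟨⟨Nat.one_le_iff_ne_zero.2 (fun h => by simp [h] at hdk; omega),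
            le_trans (Nat.le_of_dvd (by omega) hdk) hk.2⟩, hsf, hdk⟩
        · rintro ⟨-, hsf, hdk⟩
          exact ⟨⟨hdk, hk0⟩, hsf⟩
    _ = ∑ k ∈ Finset.Icc 1 n, ∑ d ∈ Finset.Icc 1 n,
          if Squarefree d ∧ d ∣ k then 1 else 0 := by
        refine Finset.sum_congr rfl fun k _ => ?_
        rw [Finset.card_filter]
    _ = ∑ d ∈ Finset.Icc 1 n, ∑ k ∈ Finset.Icc 1 n,
          if Squarefree d ∧ d ∣ k then 1 else 0 := Finset.sum_comm
    _ = ∑ d ∈ {d ∈ Finset.Icc 1 n | Squarefree d}, n / d := by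
        rw [Finset.sum_filter]
        refine Finset.sum_congr rfl fun d _ => ?_
        by_cases hsf : Squarefree d
        · simp only [hsf, true_and, if_true]
          rw [← Nat.Ioc_filter_dvd_card_eq_div n d, Finset.card_filter,
            ← Finset.Icc_add_one_left_eq_Ioc, zero_add]
        · simp [hsf]

/-- The sum of reciprocals of squares is bounded by 2. -/
lemma aux_sum_inv_sq_le (n : ℕ) : ∑ b ∈ Finset.Icc 1 n, (1 : ℝ) / (b : ℝ) ^ 2 ≤ 2 := by
  rcases n with - | m
  · simp
  have key : ∀ m : ℕ, ∑ b ∈ Finset.Icc 1 (m + 1), (1 : ℝ) / (b : ℝ) ^ 2 ≤ 2 - 1 / (m + 1) := by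
    intro m
    induction m with
    | zero => norm_num
    | succ p ih =>
      rw [show p + 1 + 1 = (p + 1) + 1 from rfl, Finset.sum_Icc_succ_top (by omega)]
      have h1 : (0 : ℝ) < (p : ℝ) + 1 := by positivity
      have h2 : (0 : ℝ) < (p : ℝ) + 2 := by positivity
      have : (1 : ℝ) / ((p : ℝ) + 1 + 1) ^ 2 ≤ 1 / ((p : ℝ) + 1) - 1 / ((p : ℝ) + 1 + 1) := by
        rw [div_sub_div _ _ (ne_of_gt h1) (by positivity), div_le_div_iff₀ (by positivity) (by positivity)]
        nlinarith
      push_cast at this ih ⊢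
      linarith
  calc ∑ b ∈ Finset.Icc 1 (m + 1), (1 : ℝ) / (b : ℝ) ^ 2 ≤ 2 - 1 / (m + 1) := key m
    _ ≤ 2 := by
        have : (0 : ℝ) < (m : ℝ) + 1 := by positivity
        have : (0:ℝ) ≤ 1 / ((m:ℝ)+1) := by positivity
        linarith

/-- Euler-type trick: harmonic sum bounded by (squarefree reciprocal sum) * (square reciprocal sum). -/
lemma aux_harmonic_le (n : ℕ) :
    ∑ k ∈ Finset.Icc 1 n, (1 : ℝ) / (k : ℝ) ≤
      (∑ a ∈ {d ∈ Finset.Icc 1 n | Squarefree d}, (1 : ℝ) / (a : ℝ)) *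
        (∑ b ∈ Finset.Icc 1 n, (1 : ℝ) / (b : ℝ) ^ 2) := by
  choose a b hab hsf using fun k : ℕ => Nat.sq_mul_squarefree k
  set g : ℕ → ℕ × ℕ := fun k => (a k, b k) with hg
  have hinj : Set.InjOn g (Finset.Icc 1 n) := by
    intro x _ y _ hxy
    have hx := hab x
    have hy := hab y
    rw [hg] at hxy
    simp only [Prod.mk.injEq] at hxy
    rw [← hx, ← hy, hxy.1, hxy.2]
  set G : ℕ × ℕ → ℝ := fun p => (1 : ℝ) / (p.1 : ℝ) * ((1 : ℝ) / (p.2 : ℝ) ^ 2) with hG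
  have h1 : ∑ k ∈ Finset.Icc 1 n, (1 : ℝ) / (k : ℝ)
      = ∑ p ∈ (Finset.Icc 1 n).image g, G p := by
    rw [Finset.sum_image hinj]
    refine Finset.sum_congr rfl fun k hk => ?_
    rw [Finset.mem_Icc] at hk
    have hk0 : (k : ℝ) ≠ 0 := by
      have : k ≠ 0 := by omega
      exact_mod_cast this
    have hcast : ((b k : ℝ)) ^ 2 * ((a k : ℝ)) = (k : ℝ) := by exact_mod_cast hab k
    rw [hG]
    simp only [hg]
    rw [div_mul_div_comm, one_mul]
    congr 1
    rw [← hcast]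
    ring
  have hsub : (Finset.Icc 1 n).image g ⊆
      {d ∈ Finset.Icc 1 n | Squarefree d} ×ˢ Finset.Icc 1 n := by
    intro p hp
    rw [Finset.mem_image] at hp
    obtain ⟨k, hk, rfl⟩ := hp
    rw [Finset.mem_Icc] at hk
    have hk0 : 0 < k := by omega
    have hadvd : a k ∣ k := ⟨b k ^ 2, (hab k).symm.trans (mul_comm _ _)⟩
    have hbdvd : b k ∣ k := Dvd.dvd.trans (dvd_pow_self (b k) two_ne_zero) ⟨a k, (hab k).symm⟩
    have ha1 : 1 ≤ a k := Nat.one_le_iff_ne_zero.2 fun h => by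
      have := hab k; rw [h] at this; simp at this; omega
    have hb1 : 1 ≤ b k := Nat.one_le_iff_ne_zero.2 fun h => by
      have := hab k; rw [h] at this; simp at this; omega
    rw [Finset.mem_product, Finset.mem_filter, Finset.mem_Icc, Finset.mem_Icc]
    exact ⟨⟨⟨ha1, le_trans (Nat.le_of_dvd hk0 hadvd) hk.2⟩, hsf k⟩,
      hb1, le_trans (Nat.le_of_dvd hk0 hbdvd) hk.2⟩
  have h2 : ∑ p ∈ (Finset.Icc 1 n).image g, G p ≤
      ∑ p ∈ {d ∈ Finset.Icc 1 n | Squarefree d} ×ˢ Finset.Icc 1 n, G p := by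
    refine Finset.sum_le_sum_of_subset_of_nonneg hsub fun p _ _ => ?_
    rw [hG]; positivity
  rw [h1]
  refine h2.trans ?_
  rw [Finset.sum_mul_sum]
  rw [Finset.sum_product]

open ArithmeticFunction in
/-- There is a constant `C > 0` such that for all `n ≥ 2`,
`n * (log n) ^ (log 2) ≤ C * ∑_{k=1}^{n} 2 ^ ω(k)`, where `ω(k)` is the number
of distinct prime divisors of `k`. -/
theorem sum_two_pow_omega_lower_bound :
    ∃ C : ℝ, 0 < C ∧ ∀ n : ℕ, 2 ≤ n →
      (n : ℝ) * Real.log n ^ Real.log 2 ≤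
        C * ∑ k ∈ Finset.Icc 1 n, (2 : ℝ) ^ (cardDistinctFactors k) := by
  refine ⟨5, by norm_num, fun n hn => ?_⟩
  set F : Finset ℕ := {d ∈ Finset.Icc 1 n | Squarefree d} with hF
  set S : ℝ := ∑ k ∈ Finset.Icc 1 n, (2 : ℝ) ^ (cardDistinctFactors k) with hS
  set T : ℝ := ∑ a ∈ F, (1 : ℝ) / (a : ℝ) with hT
  -- S as a cast of the natural number sum, rewritten via the swap lemma
  have hScast : S = ∑ d ∈ F, ((n / d : ℕ) : ℝ) := by
    rw [hS]
    have : (((∑ k ∈ Finset.Icc 1 n, 2 ^ (cardDistinctFactors k)) : ℕ) : ℝ)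
        = ∑ k ∈ Finset.Icc 1 n, (2 : ℝ) ^ (cardDistinctFactors k) := by push_cast; rfl
    rw [← this, aux_swap_sum n]
    push_cast
    rfl
  -- S ≥ n * T - n
  have hstep : ∀ d ∈ F, (n : ℝ) / (d : ℝ) - 1 ≤ ((n / d : ℕ) : ℝ) := by
    intro d hd
    rw [hF, Finset.mem_filter, Finset.mem_Icc] at hd
    have hd0 : 0 < d := hd.1.1
    have := Nat.lt_mul_div_succ n hd0
    have h2 : (n : ℝ) < (d : ℝ) * (((n / d : ℕ) : ℝ) + 1) := by exact_mod_cast this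
    have hd0' : (0 : ℝ) < (d : ℝ) := by exact_mod_cast hd0
    rw [div_sub_one (ne_of_gt hd0'), div_le_iff₀ hd0']
    nlinarith
  have hSlow : (n : ℝ) * T - (n : ℝ) ≤ S := by
    have h1 : ∑ d ∈ F, ((n : ℝ) / (d : ℝ) - 1) ≤ S := by
      rw [hScast]; exact Finset.sum_le_sum hstep
    have h2 : ∑ d ∈ F, ((n : ℝ) / (d : ℝ) - 1)
        = (n : ℝ) * T - (F.card : ℝ) := by
      rw [Finset.sum_sub_distrib, Finset.sum_const, hT, Finset.mul_sum]
      simp [mul_one_div, div_eq_mul_inv]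
    have h3 : (F.card : ℝ) ≤ (n : ℝ) := by
      have : F.card ≤ (Finset.Icc 1 n).card := Finset.card_filter_le _ _
      rw [Nat.card_Icc] at this
      exact_mod_cast le_trans this (by omega)
    rw [h2] at h1
    linarith
  -- S ≥ n
  have hSn : (n : ℝ) ≤ S := by
    have : ∀ k ∈ Finset.Icc 1 n, (1 : ℝ) ≤ (2 : ℝ) ^ (cardDistinctFactors k) :=
      fun k _ => one_le_pow₀ (by norm_num)
    calc (n : ℝ) = ∑ _k ∈ Finset.Icc 1 n, (1 : ℝ) := by
          rw [Finset.sum_const, Nat.card_Icc]; simp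
      _ ≤ S := Finset.sum_le_sum this
  -- T ≥ log n / 2
  have hTlog : Real.log n / 2 ≤ T := by
    have hH : Real.log n ≤ ∑ k ∈ Finset.Icc 1 n, (1 : ℝ) / (k : ℝ) := by
      have h1 : Real.log n ≤ Real.log ((n : ℝ) + 1) := by
        apply Real.log_le_log (by positivity)
        linarith
      have h2 := log_add_one_le_harmonic n
      have h3 : ((harmonic n : ℚ) : ℝ) = ∑ k ∈ Finset.Icc 1 n, (1 : ℝ) / (k : ℝ) := by
        rw [harmonic_eq_sum_Icc]
        push_cast
        simp [one_div]
      push_cast at h2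
      linarith [h3 ▸ h2]
    have hB := aux_sum_inv_sq_le n
    have hEuler := aux_harmonic_le n
    have hT0 : 0 ≤ T := Finset.sum_nonneg fun a _ => by positivity
    nlinarith
  -- (log n) ^ (log 2) ≤ 1 + log n
  have hlogn : 0 < Real.log n := Real.log_pos (by exact_mod_cast hn)
  have hrpow : Real.log n ^ Real.log 2 ≤ 1 + Real.log n := by
    have hlog2 : Real.log 2 ≤ 1 := by
      have := Real.log_le_sub_one_of_pos (by norm_num : (0:ℝ) < 2)
      linarith
    rcases le_or_gt (Real.log n) 1 with h | h
    · have := Real.rpow_le_one hlogn.le h (Real.log_nonneg one_le_two)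
      linarith
    · have h2 := Real.rpow_le_rpow_of_exponent_le h.le hlog2
      rw [Real.rpow_one] at h2
      linarith
  have hn0 : (0 : ℝ) ≤ (n : ℝ) := Nat.cast_nonneg n
  calc (n : ℝ) * Real.log n ^ Real.log 2 ≤ (n : ℝ) * (1 + Real.log n) :=
        mul_le_mul_of_nonneg_left hrpow hn0
    _ ≤ 5 * S := by nlinarith
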